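/- Temperature scaling with temperature T > 1 strictly decreases the maximum softmax probability whenever the logits are not all equal: if P is the softmax of l and Q is the softmax of l/T with T > 1 and l is non-constant, then max_i Q_i < max_i P_i. -/
import Mathlib


open Real Finset

/-- Temperature scaling with `T > 1` strictly decreases the maximum softmax
probability when the logits are not all equal. -/
theorem temp_scaling_decreases_max (n : ℕ) (hn : 2 ≤ n) (l : Fin n → ℝ)
    (hne : (Finset.univ : Finset (Fin n)).Nonempty)
    (hnc : ∃ i j : Fin n, l i ≠ l j) (T : ℝ) (hT : 1 < T)
    (P Q : Fin n → ℝ)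
    (hP : ∀ i, P i = Real.exp (l i) / ∑ j, Real.exp (l j))
    (hQ : ∀ i, Q i = Real.exp (l i / T) / ∑ j, Real.exp (l j / T)) :
    Finset.univ.sup' hne Q < Finset.univ.sup' hne P := by
  have hT0 : (0:ℝ) < T := lt_trans one_pos hT
  obtain ⟨i0, -, hi0⟩ := Finset.exists_max_image Finset.univ l hne
  have hmax : ∀ j, l j ≤ l i0 := fun j => hi0 j (Finset.mem_univ j)
  have hjs : ∃ j, l j < l i0 := by
    by_contra h
    push_neg at h
    obtain ⟨a, b, hab⟩ := hnc
    have ha : l a = l i0 := le_antisymm (hmax a) (h a)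
    have hb : l b = l i0 := le_antisymm (hmax b) (h b)
    exact hab (ha.trans hb.symm)
  obtain ⟨j0, hj0⟩ := hjs
  set S : ℝ := ∑ j, Real.exp (l j) with hS
  set S' : ℝ := ∑ j, Real.exp (l j / T) with hS'
  have hSpos : 0 < S := Finset.sum_pos (fun j _ => Real.exp_pos _) hne
  have hS'pos : 0 < S' := Finset.sum_pos (fun j _ => Real.exp_pos _) hne
  have hQle : Finset.univ.sup' hne Q ≤ Q i0 := by
    apply Finset.sup'_le
    intro j _
    rw [hQ j, hQ i0]
    gcongr
    exact hmax j
  have hPle : P i0 ≤ Finset.univ.sup' hne P := Finset.le_sup' P (Finset.mem_univ i0)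
  have key : Q i0 < P i0 := by
    rw [hQ i0, hP i0, div_lt_div_iff₀ hS'pos hSpos]
    rw [hS, hS', Finset.mul_sum, Finset.mul_sum]
    apply Finset.sum_lt_sum
    · intro j _
      rw [← Real.exp_add, ← Real.exp_add, Real.exp_le_exp]
      have h1 : (l i0 - l j) / T ≤ l i0 - l j := div_le_self (by linarith [hmax j]) hT.le
      rw [sub_div] at h1
      linarith
    · refine ⟨j0, Finset.mem_univ j0, ?_⟩
      rw [← Real.exp_add, ← Real.exp_add, Real.exp_lt_exp]
      have h1 : (l i0 - l j0) / T < l i0 - l j0 := div_lt_self (by linarith) hT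
      rw [sub_div] at h1
      linarith
  calc Finset.univ.sup' hne Q ≤ Q i0 := hQle
    _ < P i0 := key
    _ ≤ Finset.univ.sup' hne P := hPle
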